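/- Let d ≥ 3 and 2 ≤ k ≤ d−1. Let φ be a Borel probability measure on the unit sphere S^{d−1} of ℝ^d, let L and E be k-dimensional linear subspaces of ℝ^d, and let ρ ∈ SO(d) be a rotation with L = ρE and |ρ| ≤ 1/8. Then the Prokhorov distance between π_L φ and the pushforward ρ_*(π_E φ) (both regarded as finite Borel measures supported on the sphere S_L^{k−1} := S^{d−1} ∩ L) satisfies d_P(π_L φ, ρ_*(π_E φ)) ≤ 3·|ρ|^{1/3}. -/

import Mathlib

open MeasureTheory Metric Matrix
open scoped RealInnerProductSpace Pointwise

noncomputable section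

def frobNorm {d : ℕ} (A : Matrix (Fin d) (Fin d) ℝ) : ℝ :=
  Real.sqrt (∑ i, ∑ j, (A i j) ^ 2)

def rotDist {d : ℕ} (ρ : Matrix (Fin d) (Fin d) ℝ) : ℝ := frobNorm (ρ - 1)

def IsSO {d : ℕ} (ρ : Matrix (Fin d) (Fin d) ℝ) : Prop := ρᵀ * ρ = 1 ∧ ρ.det = 1

def rotApply {d : ℕ} (ρ : Matrix (Fin d) (Fin d) ℝ) :
    EuclideanSpace ℝ (Fin d) → EuclideanSpace ℝ (Fin d) :=
  Matrix.toEuclideanLin ρ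

def projL {d : ℕ} (L : Submodule ℝ (EuclideanSpace ℝ (Fin d)))
    (x : EuclideanSpace ℝ (Fin d)) : EuclideanSpace ℝ (Fin d) :=
  (L.orthogonalProjectionOnto x : EuclideanSpace ℝ (Fin d))

def sphProj {d : ℕ} (L : Submodule ℝ (EuclideanSpace ℝ (Fin d)))
    (x : EuclideanSpace ℝ (Fin d)) : EuclideanSpace ℝ (Fin d) :=
  ‖projL L x‖⁻¹ • projL L x

def projMeasure {d : ℕ} (L : Submodule ℝ (EuclideanSpace ℝ (Fin d)))
    (μ : Measure (EuclideanSpace ℝ (Fin d))) : Measure (EuclideanSpace ℝ (Fin d)) :=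
  Measure.map (sphProj L) (μ.withDensity fun u => ENNReal.ofReal ‖projL L u‖)

def mphi {d : ℕ} (φ : Measure (EuclideanSpace ℝ (Fin d))) : ℝ :=
  sInf ((fun u => ∫ v, |⟪u, v⟫| ∂φ) '' (sphere (0 : EuclideanSpace ℝ (Fin d)) 1))

def suppFn {d : ℕ} (B : Set (EuclideanSpace ℝ (Fin d))) (v : EuclideanSpace ℝ (Fin d)) : ℝ :=
  sSup ((fun y => ⟪y, v⟫) '' B)

def devi {d : ℕ} (L : Submodule ℝ (EuclideanSpace ℝ (Fin d)))
    (K M : Set (EuclideanSpace ℝ (Fin d))) : ℝ :=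
  Real.log (sInf {r : ℝ | ∃ α β : ℝ, ∃ z ∈ L, 0 < α ∧ 0 < β ∧
    α • M ⊆ (fun y => y + z) '' K ∧ (fun y => y + z) '' K ⊆ β • M ∧ r = β / α})

def Delta {d : ℕ} (L E : Submodule ℝ (EuclideanSpace ℝ (Fin d))) : ℝ :=
  sInf (rotDist '' {ρ | IsSO ρ ∧ L.map (Matrix.toEuclideanLin ρ) = E})

/-! ### Auxiliary lemmas -/

lemma frobNorm_nonneg {d : ℕ} (A : Matrix (Fin d) (Fin d) ℝ) : 0 ≤ frobNorm A :=
  Real.sqrt_nonneg _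

lemma norm_toEuclideanLin_le {d : ℕ} (M : Matrix (Fin d) (Fin d) ℝ)
    (x : EuclideanSpace ℝ (Fin d)) : ‖Matrix.toEuclideanLin M x‖ ≤ frobNorm M * ‖x‖ := by
  rw [EuclideanSpace.norm_eq, EuclideanSpace.norm_eq, frobNorm,
    ← Real.sqrt_mul (by positivity)]
  apply Real.sqrt_le_sqrt
  rw [Finset.sum_mul]
  apply Finset.sum_le_sum
  intro i _
  have hx : (Matrix.toEuclideanLin M x : EuclideanSpace ℝ (Fin d)) i
      = ∑ j, M i j * x j := by
    simp [Matrix.toEuclideanLin_apply, Matrix.mulVec, dotProduct]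
  rw [hx, Real.norm_eq_abs, sq_abs]
  calc (∑ j, M i j * x j) ^ 2 ≤ (∑ j, M i j ^ 2) * ∑ j, x j ^ 2 :=
        Finset.sum_mul_sq_le_sq_mul_sq _ _ _
    _ = (∑ j, M i j ^ 2) * ∑ j, ‖x j‖ ^ 2 := by simp [Real.norm_eq_abs, sq_abs]

lemma isSO_norm_toEuclideanLin {d : ℕ} {ρ : Matrix (Fin d) (Fin d) ℝ}
    (h : ρᵀ * ρ = 1) (x : EuclideanSpace ℝ (Fin d)) :
    ‖Matrix.toEuclideanLin ρ x‖ = ‖x‖ := by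
  have hx : ∀ i, (Matrix.toEuclideanLin ρ x : EuclideanSpace ℝ (Fin d)) i
      = (ρ *ᵥ (fun j => x j)) i := by
    intro i
    simp [Matrix.toEuclideanLin_apply, Matrix.mulVec, dotProduct]
  have key : (ρ *ᵥ (fun j => x j)) ⬝ᵥ (ρ *ᵥ (fun j => x j))
      = (fun j => x j) ⬝ᵥ (fun j => x j) := by
    rw [dotProduct_mulVec, ← Matrix.vecMul_transpose, Matrix.vecMul_vecMul, h,
      Matrix.vecMul_one]
  rw [EuclideanSpace.norm_eq, EuclideanSpace.norm_eq]
  congr 1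
  calc ∑ i, ‖(Matrix.toEuclideanLin ρ x : EuclideanSpace ℝ (Fin d)) i‖ ^ 2
      = (ρ *ᵥ (fun j => x j)) ⬝ᵥ (ρ *ᵥ (fun j => x j)) := by
        simp [dotProduct, hx, Real.norm_eq_abs, sq_abs, sq]
    _ = (fun j => x j) ⬝ᵥ (fun j => x j) := key
    _ = ∑ i, ‖x i‖ ^ 2 := by simp [dotProduct, Real.norm_eq_abs, sq_abs, sq]

def rotIso {d : ℕ} (ρ : Matrix (Fin d) (Fin d) ℝ) (h : ρᵀ * ρ = 1) :
    EuclideanSpace ℝ (Fin d) →ₗᵢ[ℝ] EuclideanSpace ℝ (Fin d) :=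
  ⟨Matrix.toEuclideanLin ρ, isSO_norm_toEuclideanLin h⟩

lemma projL_comm {d : ℕ} {ρ : Matrix (Fin d) (Fin d) ℝ} (h : ρᵀ * ρ = 1)
    {L E : Submodule ℝ (EuclideanSpace ℝ (Fin d))}
    (hLE : E.map (Matrix.toEuclideanLin ρ) = L) (u : EuclideanSpace ℝ (Fin d)) :
    projL L (rotApply ρ u) = rotApply ρ (projL E u) := by
  have := (rotIso ρ h).map_starProjection' E u
  have hmap : E.map ((rotIso ρ h : _ →ₗ[ℝ] _)) = L := hLE
  rw [← hmap]
  exact this.symm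

lemma projL_lipschitz {d : ℕ} (L : Submodule ℝ (EuclideanSpace ℝ (Fin d)))
    (x y : EuclideanSpace ℝ (Fin d)) : ‖projL L x - projL L y‖ ≤ ‖x - y‖ := by
  have : projL L x - projL L y
      = ((L.orthogonalProjectionOnto (x - y) : L) : EuclideanSpace ℝ (Fin d)) := by
    simp [projL, map_sub]
  rw [this]
  calc ‖((L.orthogonalProjectionOnto (x - y) : L) : EuclideanSpace ℝ (Fin d))‖
      = ‖L.orthogonalProjectionOnto (x - y)‖ := rfl
    _ ≤ ‖L.orthogonalProjectionOnto‖ * ‖x - y‖ := (L.orthogonalProjectionOnto).le_opNorm _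
    _ ≤ 1 * ‖x - y‖ :=
        mul_le_mul_of_nonneg_right (Submodule.orthogonalProjectionOnto_norm_le L) (norm_nonneg _)
    _ = ‖x - y‖ := one_mul _

lemma sphProj_comm {d : ℕ} {ρ : Matrix (Fin d) (Fin d) ℝ} (h : ρᵀ * ρ = 1)
    {L E : Submodule ℝ (EuclideanSpace ℝ (Fin d))}
    (hLE : E.map (Matrix.toEuclideanLin ρ) = L) (u : EuclideanSpace ℝ (Fin d)) :
    sphProj L (rotApply ρ u) = rotApply ρ (sphProj E u) := by
  unfold sphProj
  rw [projL_comm h hLE]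
  have hn : ‖rotApply ρ (projL E u)‖ = ‖projL E u‖ := isSO_norm_toEuclideanLin h _
  rw [hn]
  exact (_root_.map_smul (Matrix.toEuclideanLin ρ) _ _).symm

lemma measurable_sphProj {d : ℕ} (L : Submodule ℝ (EuclideanSpace ℝ (Fin d))) :
    Measurable (sphProj L) := by
  have hc : Continuous (projL L) := (L.orthogonalProjectionOnto).cont.subtype_val
  exact ((hc.norm.measurable).inv).smul hc.measurable

lemma measurable_rotApply {d : ℕ} (ρ : Matrix (Fin d) (Fin d) ℝ) :
    Measurable (rotApply ρ) :=
  (Matrix.toEuclideanLin ρ).continuous_of_finiteDimensional.measurable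

lemma norm_normalize_sub {V : Type*} [NormedAddCommGroup V] [NormedSpace ℝ V]
    (p q : V) {t δ : ℝ} (hδ : 0 < δ) (hp : δ ≤ ‖p‖) (hpq : ‖p - q‖ ≤ t) :
    ‖‖p‖⁻¹ • p - ‖q‖⁻¹ • q‖ ≤ 2 * t / δ := by
  have hp0 : 0 < ‖p‖ := hδ.trans_le hp
  have h1 : ‖‖p‖⁻¹ • p - ‖p‖⁻¹ • q‖ = ‖p - q‖ / ‖p‖ := by
    rw [← smul_sub, norm_smul, Real.norm_eq_abs, abs_inv, abs_of_pos hp0]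
    rw [inv_mul_eq_div]
  have h2 : ‖‖p‖⁻¹ • q - ‖q‖⁻¹ • q‖ ≤ |‖p‖ - ‖q‖| / ‖p‖ := by
    rw [← sub_smul, norm_smul, Real.norm_eq_abs]
    rcases eq_or_ne q 0 with hq | hq
    · simp [hq]
      positivity
    · have hq0 : 0 < ‖q‖ := norm_pos_iff.mpr hq
      have : |‖p‖⁻¹ - ‖q‖⁻¹| = |‖q‖ - ‖p‖| / (‖p‖ * ‖q‖) := by
        rw [inv_sub_inv hp0.ne' hq0.ne', abs_div, abs_of_pos (mul_pos hp0 hq0)]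
      rw [this]
      rw [div_mul_eq_mul_div, abs_sub_comm]
      rw [div_le_div_iff₀ (by positivity) hp0]
      ring_nf
      nlinarith [abs_nonneg (‖p‖ - ‖q‖)]
  have h3 : |‖p‖ - ‖q‖| ≤ ‖p - q‖ := abs_norm_sub_norm_le p q
  have ht0 : 0 ≤ ‖p - q‖ := norm_nonneg _
  calc ‖‖p‖⁻¹ • p - ‖q‖⁻¹ • q‖
      ≤ ‖‖p‖⁻¹ • p - ‖p‖⁻¹ • q‖ + ‖‖p‖⁻¹ • q - ‖q‖⁻¹ • q‖ :=
        norm_sub_le_norm_sub_add_norm_sub _ _ _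
    _ ≤ ‖p - q‖ / ‖p‖ + |‖p‖ - ‖q‖| / ‖p‖ := by rw [h1]; gcongr
    _ ≤ ‖p - q‖ / ‖p‖ + ‖p - q‖ / ‖p‖ := by gcongr
    _ = 2 * ‖p - q‖ / ‖p‖ := by ring
    _ ≤ 2 * t / δ := div_le_div₀ (by linarith) (by linarith) hδ hp

lemma cube_root_facts {t : ℝ} (ht : 0 < t) (ht8 : t ≤ 1/8) :
    0 < t ^ ((1:ℝ)/3) ∧ t ^ ((1:ℝ)/3) ≤ 1/2 ∧ 2 * t / t ^ ((1:ℝ)/3) ≤ t ^ ((1:ℝ)/3)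
      ∧ t ≤ t ^ ((1:ℝ)/3) := by
  have h0 : 0 < t ^ ((1:ℝ)/3) := Real.rpow_pos_of_pos ht _
  have h8 : (1/8 : ℝ) ^ ((1:ℝ)/3) = 1/2 := by
    rw [show (1/8 : ℝ) = (1/2 : ℝ) ^ (3:ℝ) by
      rw [show (3:ℝ) = ((3:ℕ):ℝ) by norm_num, Real.rpow_natCast]; norm_num]
    rw [← Real.rpow_mul (by norm_num : (0:ℝ) ≤ 1/2)]
    rw [show (3:ℝ) * (1/3) = 1 by norm_num, Real.rpow_one]
  have h12 : t ^ ((1:ℝ)/3) ≤ 1/2 := by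
    rw [← h8]; exact Real.rpow_le_rpow ht.le ht8 (by norm_num)
  have ht1 : t ≤ 1 := ht8.trans (by norm_num)
  have h4 : t ≤ t ^ ((1:ℝ)/3) := by
    nth_rewrite 1 [← Real.rpow_one t]
    exact Real.rpow_le_rpow_of_exponent_ge ht ht1 (by norm_num)
  refine ⟨h0, h12, ?_, h4⟩
  have h23 : t / t ^ ((1:ℝ)/3) = t ^ ((1:ℝ)/3) * t ^ ((1:ℝ)/3) := by
    rw [← Real.rpow_add ht]
    have hs := Real.rpow_sub ht (1:ℝ) (1/3)
    rw [Real.rpow_one] at hs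
    rw [show (1:ℝ)/3 + 1/3 = 1 - 1/3 by norm_num, hs]
  rw [mul_div_assoc, h23]
  nlinarith [h0, h12]

lemma pointwise_key {V : Type*} [NormedAddCommGroup V] [NormedSpace ℝ V]
    (B : Set V) (x y : V) {t ε : ℝ} (ht : 0 < t) (ht8 : t ≤ 1/8)
    (hxy : ‖x - y‖ ≤ t) (hε : 3 * t ^ ((1:ℝ)/3) ≤ ε) :
    (B.indicator (fun _ => (1:ENNReal)) (‖x‖⁻¹ • x)) * ENNReal.ofReal ‖x‖
      ≤ ((thickening ε B).indicator (fun _ => (1:ENNReal)) (‖y‖⁻¹ • y)) * ENNReal.ofReal ‖y‖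
        + ENNReal.ofReal (t + t ^ ((1:ℝ)/3)) := by
  obtain ⟨h0, h12, h23, h4⟩ := cube_root_facts ht ht8
  set δ0 := t ^ ((1:ℝ)/3) with hδ0
  rcases lt_or_ge ‖x‖ δ0 with hx | hx
  · calc (B.indicator (fun _ => (1:ENNReal)) (‖x‖⁻¹ • x)) * ENNReal.ofReal ‖x‖
        ≤ 1 * ENNReal.ofReal ‖x‖ := by
          gcongr
          exact Set.indicator_le_self' (fun _ _ => zero_le_one) _
      _ = ENNReal.ofReal ‖x‖ := one_mul _
      _ ≤ ENNReal.ofReal (t + δ0) := ENNReal.ofReal_le_ofReal (by nlinarith [norm_nonneg x])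
      _ ≤ _ := le_add_self
  · rcases Classical.em ((‖x‖⁻¹ • x) ∈ B) with hmem | hmem
    swap
    · simp [Set.indicator_of_notMem hmem]
    have hth : (‖y‖⁻¹ • y) ∈ thickening ε B := by
      rw [Metric.mem_thickening_iff]
      refine ⟨‖x‖⁻¹ • x, hmem, ?_⟩
      rw [dist_eq_norm]
      calc ‖‖y‖⁻¹ • y - ‖x‖⁻¹ • x‖ = ‖‖x‖⁻¹ • x - ‖y‖⁻¹ • y‖ := norm_sub_rev _ _
        _ ≤ 2 * t / δ0 := norm_normalize_sub x y h0 hx hxy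
        _ ≤ δ0 := h23
        _ < ε := by nlinarith
    rw [Set.indicator_of_mem hmem, Set.indicator_of_mem hth, one_mul, one_mul]
    calc ENNReal.ofReal ‖x‖ ≤ ENNReal.ofReal (‖y‖ + t) := by
          apply ENNReal.ofReal_le_ofReal
          have h := abs_le.mp ((abs_norm_sub_norm_le x y).trans hxy)
          linarith [h.2]
      _ ≤ ENNReal.ofReal ‖y‖ + ENNReal.ofReal (t + δ0) := by
          rw [← ENNReal.ofReal_add (norm_nonneg _) (by positivity)]
          apply ENNReal.ofReal_le_ofReal
          linarith

lemma projMeasure_apply {d : ℕ} (L : Submodule ℝ (EuclideanSpace ℝ (Fin d)))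
    (φ : Measure (EuclideanSpace ℝ (Fin d))) {B : Set (EuclideanSpace ℝ (Fin d))}
    (hB : MeasurableSet B) :
    projMeasure L φ B
      = ∫⁻ u, (B.indicator (fun _ => (1:ENNReal)) (sphProj L u))
          * ENNReal.ofReal ‖projL L u‖ ∂φ := by
  classical
  rw [projMeasure, Measure.map_apply (measurable_sphProj L) hB,
    withDensity_apply _ ((measurable_sphProj L) hB),
    ← lintegral_indicator ((measurable_sphProj L) hB) _]
  congr 1
  funext u
  rw [Set.indicator_apply, Set.indicator_apply, Set.mem_preimage]
  split_ifs <;> simp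

lemma mapped_projMeasure_apply {d : ℕ} {ρ : Matrix (Fin d) (Fin d) ℝ} (h : ρᵀ * ρ = 1)
    {L E : Submodule ℝ (EuclideanSpace ℝ (Fin d))}
    (hLE : E.map (Matrix.toEuclideanLin ρ) = L)
    (φ : Measure (EuclideanSpace ℝ (Fin d))) {B : Set (EuclideanSpace ℝ (Fin d))}
    (hB : MeasurableSet B) :
    Measure.map (rotApply ρ) (projMeasure E φ) B
      = ∫⁻ u, (B.indicator (fun _ => (1:ENNReal)) (sphProj L (rotApply ρ u)))
          * ENNReal.ofReal ‖projL L (rotApply ρ u)‖ ∂φ := by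
  classical
  rw [Measure.map_apply (measurable_rotApply ρ) hB,
    projMeasure_apply E φ ((measurable_rotApply ρ) hB)]
  congr 1
  funext u
  rw [sphProj_comm h hLE, projL_comm h hLE,
    show ‖rotApply ρ (projL E u)‖ = ‖projL E u‖ from isSO_norm_toEuclideanLin h _]
  rw [Set.indicator_apply, Set.indicator_apply, Set.mem_preimage]

lemma rotApply_one {d : ℕ} (x : EuclideanSpace ℝ (Fin d)) :
    rotApply (1 : Matrix (Fin d) (Fin d) ℝ) x = x := by
  apply (WithLp.equiv 2 (Fin d → ℝ)).injective
  simp [rotApply, Matrix.ofLp_toEuclideanLin_apply, Matrix.one_mulVec]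

lemma rotDist_eq_zero {d : ℕ} {ρ : Matrix (Fin d) (Fin d) ℝ} (h : rotDist ρ = 0) :
    ρ = 1 := by
  have hs : ∑ i, ∑ j, ((ρ - 1) i j) ^ 2 = 0 := by
    have h1 : ∑ i, ∑ j, ((ρ - 1) i j) ^ 2 ≤ 0 := Real.sqrt_eq_zero'.mp h
    exact le_antisymm h1 (by positivity)
  have : ∀ i j, (ρ - 1) i j = 0 := by
    intro i j
    have h1 := (Finset.sum_eq_zero_iff_of_nonneg (fun i _ => by positivity)).mp hs i
      (Finset.mem_univ i)
    have h2 := (Finset.sum_eq_zero_iff_of_nonneg (fun j _ => by positivity)).mp h1 j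
      (Finset.mem_univ j)
    exact pow_eq_zero_iff two_ne_zero |>.mp h2
  ext i j
  have := this i j
  simpa [Matrix.sub_apply, sub_eq_zero] using this

lemma frobNorm_sub_comm {d : ℕ} (A B : Matrix (Fin d) (Fin d) ℝ) :
    frobNorm (A - B) = frobNorm (B - A) := by
  unfold frobNorm
  congr 1
  apply Finset.sum_congr rfl
  intro i _
  apply Finset.sum_congr rfl
  intro j _
  simp only [Matrix.sub_apply]
  ring

/-- Lemma 3.1: Prokhorov distance estimate between projected directional measures. -/
theorem prokhorov_dist_projMeasure_le {d k : ℕ} (hd : 3 ≤ d) (hk2 : 2 ≤ k) (hkd : k ≤ d - 1)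
    (φ : Measure (EuclideanSpace ℝ (Fin d))) [IsProbabilityMeasure φ]
    (hφ : φ (sphere (0 : EuclideanSpace ℝ (Fin d)) 1)ᶜ = 0)
    (L E : Submodule ℝ (EuclideanSpace ℝ (Fin d)))
    (hL : Module.finrank ℝ L = k) (hE : Module.finrank ℝ E = k)
    (ρ : Matrix (Fin d) (Fin d) ℝ) (hρ : IsSO ρ)
    (hLE : E.map (Matrix.toEuclideanLin ρ) = L)
    (hsmall : rotDist ρ ≤ 1 / 8) :
    levyProkhorovDist (projMeasure L φ) (Measure.map (rotApply ρ) (projMeasure E φ))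
      ≤ 3 * rotDist ρ ^ ((1 : ℝ) / 3) := by
  set t := rotDist ρ with htdef
  have ht0 : 0 ≤ t := frobNorm_nonneg _
  rcases eq_or_lt_of_le ht0 with ht | ht
  · -- t = 0: ρ = 1, measures coincide
    have hρ1 : ρ = 1 := rotDist_eq_zero ht.symm
    subst hρ1
    have hid : rotApply (1 : Matrix (Fin d) (Fin d) ℝ) = id := funext rotApply_one
    have hEL : E = L := by
      rw [← hLE]
      have : Matrix.toEuclideanLin (1 : Matrix (Fin d) (Fin d) ℝ)
          = (LinearMap.id : EuclideanSpace ℝ (Fin d) →ₗ[ℝ] EuclideanSpace ℝ (Fin d)) := by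
        apply LinearMap.ext
        intro x
        exact rotApply_one x
      rw [this, Submodule.map_id]
    rw [hid, Measure.map_id, hEL]
    have : levyProkhorovDist (projMeasure L φ) (projMeasure L φ) = 0 :=
      levyProkhorovDist_self _
    rw [this]
    positivity
  · -- main case: 0 < t
    have ht8 : t ≤ 1/8 := hsmall
    obtain ⟨h0, h12, h23, h4⟩ := cube_root_facts ht ht8
    set δ0 := t ^ ((1:ℝ)/3) with hδ0
    -- a.e. statement: points are on the sphere
    have hae : ∀ᵐ u ∂φ, ‖u‖ = 1 := by
      rw [ae_iff]
      have : {u : EuclideanSpace ℝ (Fin d) | ¬ ‖u‖ = 1}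
          ⊆ (sphere (0 : EuclideanSpace ℝ (Fin d)) 1)ᶜ := by
        intro u hu
        simp only [Set.mem_compl_iff, mem_sphere_iff_norm, sub_zero]
        exact hu
      exact measure_mono_null this hφ
    -- key norm estimate
    have hkey : ∀ u : EuclideanSpace ℝ (Fin d), ‖u‖ = 1 →
        ‖projL L u - projL L (rotApply ρ u)‖ ≤ t := by
      intro u hu
      calc ‖projL L u - projL L (rotApply ρ u)‖ ≤ ‖u - rotApply ρ u‖ := projL_lipschitz L _ _
        _ = ‖Matrix.toEuclideanLin ((1 : Matrix (Fin d) (Fin d) ℝ) - ρ) u‖ := by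
            rw [map_sub]
            congr 1
            rw [LinearMap.sub_apply]
            congr 1
            exact (rotApply_one u).symm
        _ ≤ frobNorm ((1 : Matrix (Fin d) (Fin d) ℝ) - ρ) * ‖u‖ := norm_toEuclideanLin_le _ _
        _ = t := by rw [hu, mul_one, frobNorm_sub_comm]; rfl
    -- bound the Lévy-Prokhorov edistance
    have hedist : levyProkhorovEDist (projMeasure L φ)
        (Measure.map (rotApply ρ) (projMeasure E φ)) ≤ ENNReal.ofReal (3 * δ0) := by
      apply levyProkhorovEDist_le_of_forall
      intro ε B hδε hεtop hB
      have hεr : 3 * δ0 < ε.toReal := by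
        have := ENNReal.toReal_lt_toReal (by finiteness) hεtop.ne |>.mpr hδε
        rwa [ENNReal.toReal_ofReal (by positivity)] at this
      have hc_le : ENNReal.ofReal (t + δ0) ≤ ε := by
        calc ENNReal.ofReal (t + δ0) ≤ ENNReal.ofReal (ε.toReal) := by
              apply ENNReal.ofReal_le_ofReal
              nlinarith
          _ = ε := ENNReal.ofReal_toReal hεtop.ne
      have hT : MeasurableSet (thickening ε.toReal B) := isOpen_thickening.measurableSet
      constructor
      · -- μ B ≤ ν (thickening) + ε
        rw [projMeasure_apply L φ hB, mapped_projMeasure_apply hρ.1 hLE φ hT]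
        calc ∫⁻ u, (B.indicator (fun _ => (1:ENNReal)) (sphProj L u))
              * ENNReal.ofReal ‖projL L u‖ ∂φ
            ≤ ∫⁻ u, (((thickening ε.toReal B).indicator (fun _ => (1:ENNReal))
                (sphProj L (rotApply ρ u))) * ENNReal.ofReal ‖projL L (rotApply ρ u)‖
                + ENNReal.ofReal (t + δ0)) ∂φ := by
              apply lintegral_mono_ae
              filter_upwards [hae] with u hu
              exact pointwise_key B (projL L u) (projL L (rotApply ρ u)) ht ht8
                (hkey u hu) hεr.le
          _ = (∫⁻ u, ((thickening ε.toReal B).indicator (fun _ => (1:ENNReal))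
                (sphProj L (rotApply ρ u))) * ENNReal.ofReal ‖projL L (rotApply ρ u)‖ ∂φ)
                + ENNReal.ofReal (t + δ0) := by
              rw [lintegral_add_right _ measurable_const, lintegral_const, measure_univ, mul_one]
          _ ≤ _ := by gcongr
      · -- ν B ≤ μ (thickening) + ε
        rw [projMeasure_apply L φ hT, mapped_projMeasure_apply hρ.1 hLE φ hB]
        calc ∫⁻ u, (B.indicator (fun _ => (1:ENNReal)) (sphProj L (rotApply ρ u)))
              * ENNReal.ofReal ‖projL L (rotApply ρ u)‖ ∂φ
            ≤ ∫⁻ u, (((thickening ε.toReal B).indicator (fun _ => (1:ENNReal))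
                (sphProj L u)) * ENNReal.ofReal ‖projL L u‖
                + ENNReal.ofReal (t + δ0)) ∂φ := by
              apply lintegral_mono_ae
              filter_upwards [hae] with u hu
              apply pointwise_key B (projL L (rotApply ρ u)) (projL L u) ht ht8 _ hεr.le
              rw [norm_sub_rev]
              exact hkey u hu
          _ = (∫⁻ u, ((thickening ε.toReal B).indicator (fun _ => (1:ENNReal))
                (sphProj L u)) * ENNReal.ofReal ‖projL L u‖ ∂φ)
                + ENNReal.ofReal (t + δ0) := by
              rw [lintegral_add_right _ measurable_const, lintegral_const, measure_univ, mul_one]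
          _ ≤ _ := by gcongr
    -- conclude
    rw [levyProkhorovDist]
    calc (levyProkhorovEDist (projMeasure L φ)
          (Measure.map (rotApply ρ) (projMeasure E φ))).toReal
        ≤ (ENNReal.ofReal (3 * δ0)).toReal := ENNReal.toReal_mono (by finiteness) hedist
      _ = 3 * δ0 := ENNReal.toReal_ofReal (by positivity)

end
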